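/- If A, B ≤ K/4 (K ≥ 1), then the variance of the number of bins hit by at least one of A good balls and none of B bad balls, when all balls are thrown independently and uniformly into K bins, is at most 7K. -/

import Mathlib

open Finset

lemma cnt (n K : ℕ) (T : Finset (Fin K)) :
    ∑ g : Fin n → Fin K, (if ∀ a, g a ∈ T then (1:ℝ) else 0) = ((T.card ^ n : ℕ) : ℝ) := by
  classical
  rw [Finset.sum_boole]
  norm_cast
  have h : (Finset.univ.filter fun g : Fin n → Fin K => ∀ a, g a ∈ T)
      = Fintype.piFinset (fun _ => T) := by
    ext g; simp [Fintype.mem_piFinset]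
  rw [h, Fintype.card_piFinset]
  simp

lemma cnt_one (n K : ℕ) (i : Fin K) :
    ∑ g : Fin n → Fin K, (if ∀ a, g a ≠ i then (1:ℝ) else 0) = (((K-1) ^ n : ℕ) : ℝ) := by
  classical
  have h := cnt n K ({i}ᶜ)
  simp only [Finset.mem_compl, Finset.mem_singleton] at h
  rw [h, Finset.card_compl]
  simp

lemma cnt_two (n K : ℕ) (i j : Fin K) (hij : i ≠ j) :
    ∑ g : Fin n → Fin K, (if (∀ a, g a ≠ i) ∧ (∀ a, g a ≠ j) then (1:ℝ) else 0)
      = (((K-2) ^ n : ℕ) : ℝ) := by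
  classical
  have h := cnt n K ({i, j}ᶜ)
  simp only [Finset.mem_compl, Finset.mem_insert, Finset.mem_singleton, not_or] at h
  have h2 : ({i, j} : Finset (Fin K)).card = 2 := by
    rw [Finset.card_insert_of_notMem (by simpa using hij), Finset.card_singleton]
  have he : (∑ g : Fin n → Fin K, if (∀ a, g a ≠ i) ∧ (∀ a, g a ≠ j) then (1:ℝ) else 0)
      = ∑ g : Fin n → Fin K, if ∀ a, ¬g a = i ∧ ¬g a = j then (1:ℝ) else 0 := by
    refine Finset.sum_congr rfl fun g _ => ?_
    congr 1
    simp [forall_and]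
  rw [he, h, Finset.card_compl, h2]
  simp


lemma swap3 {α β γ : Type*} [Fintype α] [Fintype β] [Fintype γ]
    (u : γ → α → ℝ) (v : γ → β → ℝ) :
    ∑ g : α, ∑ b : β, ∑ i : γ, u i g * v i b
      = ∑ i : γ, (∑ g : α, u i g) * (∑ b : β, v i b) := by
  have h1 : ∀ g : α, (∑ b : β, ∑ i : γ, u i g * v i b)
      = ∑ i : γ, u i g * ∑ b : β, v i b := by
    intro g
    rw [Finset.sum_comm]
    exact Finset.sum_congr rfl fun i _ => (Finset.mul_sum _ _ _).symm
  calc ∑ g : α, ∑ b : β, ∑ i : γ, u i g * v i b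
      = ∑ g : α, ∑ i : γ, u i g * ∑ b : β, v i b :=
        Finset.sum_congr rfl fun g _ => h1 g
    _ = ∑ i : γ, ∑ g : α, u i g * ∑ b : β, v i b := Finset.sum_comm
    _ = ∑ i : γ, (∑ g : α, u i g) * (∑ b : β, v i b) :=
        Finset.sum_congr rfl fun i _ => (Finset.sum_mul _ _ _).symm

lemma swap4 {α β γ δ : Type*} [Fintype α] [Fintype β] [Fintype γ] [Fintype δ]
    (u : γ → δ → α → ℝ) (v : γ → δ → β → ℝ) :
    ∑ g : α, ∑ b : β, ∑ i : γ, ∑ j : δ, u i j g * v i j b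
      = ∑ i : γ, ∑ j : δ, (∑ g : α, u i j g) * (∑ b : β, v i j b) := by
  have h1 : ∀ g : α, (∑ b : β, ∑ i : γ, ∑ j : δ, u i j g * v i j b)
      = ∑ i : γ, ∑ j : δ, u i j g * ∑ b : β, v i j b := by
    intro g
    rw [Finset.sum_comm]
    refine Finset.sum_congr rfl fun i _ => ?_
    rw [Finset.sum_comm]
    exact Finset.sum_congr rfl fun j _ => (Finset.mul_sum _ _ _).symm
  calc ∑ g : α, ∑ b : β, ∑ i : γ, ∑ j : δ, u i j g * v i j b
      = ∑ g : α, ∑ i : γ, ∑ j : δ, u i j g * ∑ b : β, v i j b :=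
        Finset.sum_congr rfl fun g _ => h1 g
    _ = ∑ i : γ, ∑ g : α, ∑ j : δ, u i j g * ∑ b : β, v i j b := Finset.sum_comm
    _ = ∑ i : γ, ∑ j : δ, (∑ g : α, u i j g) * (∑ b : β, v i j b) := by
        refine Finset.sum_congr rfl fun i _ => ?_
        rw [Finset.sum_comm]
        exact Finset.sum_congr rfl fun j _ => (Finset.sum_mul _ _ _).symm

lemma ind_mul_ind (P Q : Prop) [Decidable P] [Decidable Q] :
    (if P then (1:ℝ) else 0) * (if Q then 1 else 0) = if P ∧ Q then 1 else 0 := by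
  by_cases hP : P <;> by_cases hQ : Q <;> simp [hP, hQ]

lemma hit_eq (n K : ℕ) (i : Fin K) (g : Fin n → Fin K) :
    (if ∃ a, g a = i then (1:ℝ) else 0) = 1 - (if ∀ a, g a ≠ i then (1:ℝ) else 0) := by
  by_cases h : ∀ a, g a ≠ i
  · have h' : ¬ ∃ a, g a = i := by push_neg; exact h
    simp [h, h']
  · have h' : ∃ a, g a = i := by push_neg at h; exact h
    simp [h, h']

lemma sumF (n K : ℕ) (i : Fin K) :
    ∑ g : Fin n → Fin K, (if ∃ a, g a = i then (1:ℝ) else 0)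
      = ((K ^ n : ℕ) : ℝ) - (((K-1) ^ n : ℕ) : ℝ) := by
  rw [Finset.sum_congr rfl fun g _ => hit_eq n K i g, Finset.sum_sub_distrib, cnt_one]
  congr 1
  rw [Finset.sum_const, Finset.card_univ]
  simp [Fintype.card_fun]

lemma sumFF (n K : ℕ) (i j : Fin K) (hij : i ≠ j) :
    ∑ g : Fin n → Fin K,
        (if ∃ a, g a = i then (1:ℝ) else 0) * (if ∃ a, g a = j then (1:ℝ) else 0)
      = ((K ^ n : ℕ) : ℝ) - 2 * (((K-1) ^ n : ℕ) : ℝ) + (((K-2) ^ n : ℕ) : ℝ) := by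
  have key : ∀ g : Fin n → Fin K,
      (if ∃ a, g a = i then (1:ℝ) else 0) * (if ∃ a, g a = j then (1:ℝ) else 0)
      = 1 - (if ∀ a, g a ≠ i then (1:ℝ) else 0) - (if ∀ a, g a ≠ j then (1:ℝ) else 0)
        + (if (∀ a, g a ≠ i) ∧ (∀ a, g a ≠ j) then (1:ℝ) else 0) := by
    intro g
    rw [hit_eq n K i g, hit_eq n K j g, ← ind_mul_ind]
    ring
  rw [Finset.sum_congr rfl fun g _ => key g]
  rw [Finset.sum_add_distrib, Finset.sum_sub_distrib, Finset.sum_sub_distrib,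
    cnt_one, cnt_one, cnt_two n K i j hij]
  have : ∑ _g : Fin n → Fin K, (1:ℝ) = ((K ^ n : ℕ) : ℝ) := by
    rw [Finset.sum_const, Finset.card_univ]
    simp [Fintype.card_fun]
  rw [this]; ring

lemma sumHH (n K : ℕ) (i j : Fin K) (hij : i ≠ j) :
    ∑ b : Fin n → Fin K,
        (if ∀ a, b a ≠ i then (1:ℝ) else 0) * (if ∀ a, b a ≠ j then (1:ℝ) else 0)
      = (((K-2) ^ n : ℕ) : ℝ) := by
  rw [Finset.sum_congr rfl fun b _ => ind_mul_ind _ _]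
  exact cnt_two n K i j hij


/-- The number of bins (out of `K`) receiving at least one of the `A` good balls
(placement `g`) and none of the `B` bad balls (placement `b`). -/
def goodBins (A B K : ℕ) (g : Fin A → Fin K) (b : Fin B → Fin K) : ℕ :=
  (Finset.univ.filter (fun i : Fin K => (∃ a, g a = i) ∧ ∀ j, b j ≠ i)).card

set_option maxHeartbeats 800000 in
/-- If `A, B ≤ K/4`, then the variance of the number of bins hit by at least one of `A`
good balls and none of `B` bad balls, when all balls are thrown independently and
uniformly into `K ≥ 1` bins, is at most `7K`. -/
theorem stmt_13 (A B K : ℕ) (hK : 1 ≤ K)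
    (hA : (A : ℝ) ≤ K / 4) (hB : (B : ℝ) ≤ K / 4) :
    (∑ g : Fin A → Fin K, ∑ b : Fin B → Fin K, (goodBins A B K g b : ℝ) ^ 2)
          / ((K : ℝ) ^ A * (K : ℝ) ^ B)
        - ((∑ g : Fin A → Fin K, ∑ b : Fin B → Fin K, (goodBins A B K g b : ℝ))
            / ((K : ℝ) ^ A * (K : ℝ) ^ B)) ^ 2
      ≤ 7 * K := by
  classical
  -- abbreviations
  set KA : ℝ := ((K ^ A : ℕ) : ℝ) with hKA
  set KB : ℝ := ((K ^ B : ℕ) : ℝ) with hKB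
  set c1A : ℝ := (((K-1) ^ A : ℕ) : ℝ) with hc1A
  set c2A : ℝ := (((K-2) ^ A : ℕ) : ℝ) with hc2A
  set c1B : ℝ := (((K-1) ^ B : ℕ) : ℝ) with hc1B
  set c2B : ℝ := (((K-2) ^ B : ℕ) : ℝ) with hc2B
  set aR : ℝ := KA - c1A with haR
  set dR : ℝ := KA - 2 * c1A + c2A with hdR
  clear_value KA KB c1A c2A c1B c2B aR dR
  -- the indicator decomposition
  have hX : ∀ (g : Fin A → Fin K) (b : Fin B → Fin K), (goodBins A B K g b : ℝ)
      = ∑ i : Fin K,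
          (if ∃ a, g a = i then (1:ℝ) else 0) * (if ∀ j, b j ≠ i then (1:ℝ) else 0) := by
    intro g b
    unfold goodBins
    rw [← Finset.sum_boole]
    exact Finset.sum_congr rfl fun i _ => (ind_mul_ind _ _).symm
  -- first moment
  have hS1 : (∑ g : Fin A → Fin K, ∑ b : Fin B → Fin K, (goodBins A B K g b : ℝ))
      = K * (aR * c1B) := by
    simp only [hX]
    rw [swap3]
    have h1 : ∀ i : Fin K,
        (∑ g : Fin A → Fin K, (if ∃ a, g a = i then (1:ℝ) else 0))
          * (∑ b : Fin B → Fin K, (if ∀ j, b j ≠ i then (1:ℝ) else 0)) = aR * c1B := by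
      intro i
      rw [sumF, cnt_one, haR, hc1A, hc1B, hKA]
    rw [Finset.sum_congr rfl fun i _ => h1 i, Finset.sum_const, Finset.card_univ,
      Fintype.card_fin, nsmul_eq_mul]
  -- second moment
  have hS2 : (∑ g : Fin A → Fin K, ∑ b : Fin B → Fin K, (goodBins A B K g b : ℝ) ^ 2)
      = K * (aR * c1B) + (K * ((K:ℝ) - 1)) * (dR * c2B) := by
    have expand : ∀ (g : Fin A → Fin K) (b : Fin B → Fin K), (goodBins A B K g b : ℝ) ^ 2
        = ∑ i : Fin K, ∑ j : Fin K,
            ((if ∃ a, g a = i then (1:ℝ) else 0) * (if ∃ a, g a = j then (1:ℝ) else 0))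
            * ((if ∀ j', b j' ≠ i then (1:ℝ) else 0) * (if ∀ j', b j' ≠ j then (1:ℝ) else 0)) := by
      intro g b
      rw [sq, hX, Finset.sum_mul_sum]
      exact Finset.sum_congr rfl fun i _ => Finset.sum_congr rfl fun j _ => by ring
    simp only [expand]
    rw [swap4]
    have hterm : ∀ i j : Fin K,
        (∑ g : Fin A → Fin K,
            (if ∃ a, g a = i then (1:ℝ) else 0) * (if ∃ a, g a = j then (1:ℝ) else 0))
        * (∑ b : Fin B → Fin K,
            (if ∀ j', b j' ≠ i then (1:ℝ) else 0) * (if ∀ j', b j' ≠ j then (1:ℝ) else 0))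
        = if i = j then aR * c1B else dR * c2B := by
      intro i j
      by_cases hij : i = j
      · subst hij
        have e1 : ∀ g : Fin A → Fin K,
            (if ∃ a, g a = i then (1:ℝ) else 0) * (if ∃ a, g a = i then (1:ℝ) else 0)
            = (if ∃ a, g a = i then (1:ℝ) else 0) := by
          intro g; by_cases h : ∃ a, g a = i <;> simp [h]
        have e2 : ∀ b : Fin B → Fin K,
            (if ∀ j', b j' ≠ i then (1:ℝ) else 0) * (if ∀ j', b j' ≠ i then (1:ℝ) else 0)
            = (if ∀ j', b j' ≠ i then (1:ℝ) else 0) := by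
          intro b; by_cases h : ∀ j', b j' ≠ i <;> simp [h]
        rw [Finset.sum_congr rfl fun g _ => e1 g, Finset.sum_congr rfl fun b _ => e2 b,
          sumF, cnt_one, if_pos rfl, haR, hc1A, hc1B, hKA]
      · rw [if_neg hij, sumFF A K i j hij, sumHH B K i j hij, hdR, hc1A, hc2A, hc2B, hKA]
    rw [Finset.sum_congr rfl fun i _ => Finset.sum_congr rfl fun j _ => hterm i j]
    have hrow : ∀ i : Fin K, (∑ j : Fin K, if i = j then aR * c1B else dR * c2B)
        = dR * c2B * K + (aR * c1B - dR * c2B) := by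
      intro i
      have : ∀ j : Fin K, (if i = j then aR * c1B else dR * c2B)
          = dR * c2B + (if i = j then aR * c1B - dR * c2B else 0) := by
        intro j; by_cases h : i = j <;> simp [h]
      rw [Finset.sum_congr rfl fun j _ => this j, Finset.sum_add_distrib,
        Finset.sum_const, Finset.card_univ, Fintype.card_fin, Finset.sum_ite_eq,
        if_pos (Finset.mem_univ i), nsmul_eq_mul]
      ring
    rw [Finset.sum_congr rfl fun i _ => hrow i, Finset.sum_const, Finset.card_univ,
      Fintype.card_fin, nsmul_eq_mul]
    ring
  -- basic positivity facts
  have hK1 : (1:ℝ) ≤ (K:ℝ) := by exact_mod_cast hK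
  have hKA0 : 0 < KA := by
    rw [hKA]; exact_mod_cast Nat.pow_pos (n := A) (by omega)
  have hKB0 : 0 < KB := by
    rw [hKB]; exact_mod_cast Nat.pow_pos (n := B) (by omega)
  have hN0 : 0 < KA * KB := mul_pos hKA0 hKB0
  have hc1A_le : c1A ≤ KA := by
    rw [hc1A, hKA]; exact_mod_cast Nat.pow_le_pow_left (Nat.sub_le K 1) A
  have hc1B_le : c1B ≤ KB := by
    rw [hc1B, hKB]; exact_mod_cast Nat.pow_le_pow_left (Nat.sub_le K 1) B
  have hc1B0 : 0 ≤ c1B := by rw [hc1B]; positivity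
  have hc2B0 : 0 ≤ c2B := by rw [hc2B]; positivity
  have haR0 : 0 ≤ aR := by rw [haR]; linarith
  -- key inequalities (K-2)*K ≤ (K-1)^2
  have hnat : (K - 2) * K ≤ (K - 1) * (K - 1) := by
    rcases Nat.lt_or_ge K 2 with h | h
    · simp [Nat.sub_eq_zero_of_le (le_of_lt h)]
    · have h2 : K - 2 + 2 = K := Nat.sub_add_cancel h
      have h1 : K - 1 + 1 = K := Nat.sub_add_cancel (by omega)
      nlinarith [h1, h2]
  have hdA : c2A * KA ≤ c1A * c1A := by
    rw [hc2A, hKA, hc1A]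
    have : (K - 2) ^ A * K ^ A ≤ (K - 1) ^ A * (K - 1) ^ A := by
      rw [← Nat.mul_pow, ← Nat.mul_pow]
      exact Nat.pow_le_pow_left hnat A
    exact_mod_cast this
  have heB : c2B * KB ≤ c1B * c1B := by
    rw [hc2B, hKB, hc1B]
    have : (K - 2) ^ B * K ^ B ≤ (K - 1) ^ B * (K - 1) ^ B := by
      rw [← Nat.mul_pow, ← Nat.mul_pow]
      exact Nat.pow_le_pow_left hnat B
    exact_mod_cast this
  -- dR * KA ≤ aR ^ 2
  have hdKA : dR * KA ≤ aR ^ 2 := by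
    have : aR ^ 2 - dR * KA = c1A * c1A - c2A * KA := by rw [haR, hdR]; ring
    linarith [hdA]
  have heKB : c2B * KB ≤ c1B ^ 2 := by rw [pow_two]; exact heB
  -- putting it together
  have hNg : ((K:ℝ) ^ A * (K:ℝ) ^ B) = KA * KB := by rw [hKA, hKB]; push_cast; ring
  rw [hS1, hS2, hNg]
  set N : ℝ := KA * KB with hN
  clear_value N
  set p : ℝ := aR * c1B / N with hp
  have hp0 : 0 ≤ p := by
    rw [hp]; exact div_nonneg (mul_nonneg haR0 hc1B0) (le_of_lt hN0)
  have hp1 : p ≤ 1 := by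
    rw [hp, div_le_one hN0, hN]
    exact mul_le_mul (by rw [haR]; linarith) hc1B_le hc1B0 (le_of_lt hKA0)
  have hq : dR * c2B / N ≤ p ^ 2 := by
    rw [hp, div_pow, div_le_div_iff₀ hN0 (by positivity)]
    have h1 : dR * c2B * N ^ 2 = (dR * KA) * (c2B * KB) * N := by rw [hN]; ring
    have h2 : (aR * c1B) ^ 2 * N = (aR ^ 2 * c1B ^ 2) * N := by ring
    rw [h1, h2]
    have hstep : (dR * KA) * (c2B * KB) ≤ aR ^ 2 * c1B ^ 2 := by
      have hcb : 0 ≤ c2B * KB := mul_nonneg hc2B0 (le_of_lt hKB0)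
      calc (dR * KA) * (c2B * KB) ≤ aR ^ 2 * (c2B * KB) :=
            mul_le_mul_of_nonneg_right hdKA hcb
        _ ≤ aR ^ 2 * c1B ^ 2 := mul_le_mul_of_nonneg_left heKB (sq_nonneg aR)
    exact mul_le_mul_of_nonneg_right hstep (le_of_lt hN0)
  have hsplit : ((K:ℝ) * (aR * c1B) + K * ((K:ℝ) - 1) * (dR * c2B)) / N
      = K * p + K * ((K:ℝ) - 1) * (dR * c2B / N) := by
    rw [hp]; field_simp; try ring
  have hsq : ((K:ℝ) * (aR * c1B) / N) ^ 2 = (K * p) ^ 2 := by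
    rw [hp]; field_simp; try ring
  rw [hsplit, hsq]
  have hKK1 : 0 ≤ (K:ℝ) * ((K:ℝ) - 1) := mul_nonneg (by linarith) (by linarith)
  have h1 : (K:ℝ) * ((K:ℝ) - 1) * (dR * c2B / N) ≤ (K:ℝ) * ((K:ℝ) - 1) * p ^ 2 :=
    mul_le_mul_of_nonneg_left hq hKK1
  have hKp : (K:ℝ) * p ≤ (K:ℝ) := mul_le_of_le_one_right (by linarith) hp1
  have hKp2 : 0 ≤ (K:ℝ) * p ^ 2 := by positivity
  have hexp : ((K:ℝ) * p) ^ 2 = (K:ℝ) * ((K:ℝ) - 1) * p ^ 2 + (K:ℝ) * p ^ 2 := by ring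
  linarith [h1, hKp, hKp2, hexp, hK1]
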